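/- arXiv:2209.00697 — 2 statements merged into one kernel-verified Lean document; each statement's English description precedes it below -/
import Mathlib

section
/- With Q, Q' as in the construction (Q the dual quiver of a φ-preserved brane tiling with all vertex orbits of size n, and ℂQ' the localisation of ℂQ^# at the isomorphism arrows), the map ξ : ℂQ → ℂQ' sending each constant path e_i to e_i and each arrow a ∈ Q₁ to p_a a_j q_a — where a lies in the φ-orbit of the chosen generating arrow a_j and p_a : t(a_j) → t(a), q_a : s(a) → s(a_j) are the unique paths composed solely of isomorphism arrows or their inverses — is a well-defined injective algebra homomorphism. -/
noncomputable section
open scoped Classical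

structure Quiv : Type 1 where
  V : Type
  A : Type
  [finV : Fintype V]
  [finA : Fintype A]
  s : A → V
  t : A → V

attribute [instance] Quiv.finV Quiv.finA

namespace Quiv

variable (k : Type) [CommRing k] (Q : Quiv)

inductive PathRel : FreeAlgebra k (Q.V ⊕ Q.A) → FreeAlgebra k (Q.V ⊕ Q.A) → Prop
  | vertex_mul (i j : Q.V) : PathRel
      (FreeAlgebra.ι k (Sum.inl i) * FreeAlgebra.ι k (Sum.inl j))
      (if i = j then FreeAlgebra.ι k (Sum.inl i) else 0)
  | vertex_sum : PathRel (∑ i : Q.V, FreeAlgebra.ι k (Sum.inl i)) 1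
  | target_mul (a : Q.A) : PathRel
      (FreeAlgebra.ι k (Sum.inl (Q.t a)) * FreeAlgebra.ι k (Sum.inr a))
      (FreeAlgebra.ι k (Sum.inr a))
  | source_mul (a : Q.A) : PathRel
      (FreeAlgebra.ι k (Sum.inr a) * FreeAlgebra.ι k (Sum.inl (Q.s a)))
      (FreeAlgebra.ι k (Sum.inr a))

def PathAlg : Type := RingQuot (PathRel k Q)

instance : Ring (PathAlg k Q) := inferInstanceAs (Ring (RingQuot _))
instance : Algebra k (PathAlg k Q) := inferInstanceAs (Algebra k (RingQuot _))

def vtx (i : Q.V) : PathAlg k Q :=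
  RingQuot.mkAlgHom k (PathRel k Q) (FreeAlgebra.ι k (Sum.inl i))

def arr (a : Q.A) : PathAlg k Q :=
  RingQuot.mkAlgHom k (PathRel k Q) (FreeAlgebra.ι k (Sum.inr a))

def pathOf (l : List Q.A) : PathAlg k Q := (l.map (arr k Q)).prod

def Composable (l : List Q.A) : Prop := List.Chain' (fun a b => Q.s a = Q.t b) l

def IsCycle (l : List Q.A) : Prop :=
  l ≠ [] ∧ List.Chain' (fun a b => Q.s a = Q.t b) (l ++ l.take 1)

def IsPathFrom (l : List Q.A) (i j : Q.V) : Prop :=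
  Composable Q l ∧ (l = [] → i = j) ∧
    (∀ h : l ≠ [], Q.t (l.head h) = j) ∧ (∀ h : l ≠ [], Q.s (l.getLast h) = i)

def cycDeriv (l : List Q.A) (a : Q.A) : PathAlg k Q :=
  ∑ i ∈ Finset.range l.length,
    if (l.rotate i).head? = some a then pathOf k Q (l.rotate i).tail else 0

abbrev Potential := List (k × List Q.A)

def Potential.deriv (W : Potential k Q) (a : Q.A) : PathAlg k Q :=
  (W.map fun p => p.1 • cycDeriv k Q p.2 a).sum

def Potential.elem (W : Potential k Q) : PathAlg k Q :=
  (W.map fun p => p.1 • pathOf k Q p.2).sum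

inductive JacRel (W : Potential k Q) : PathAlg k Q → PathAlg k Q → Prop
  | deriv (a : Q.A) : JacRel W (Potential.deriv k Q W a) 0

def Jac (W : Potential k Q) : Type := RingQuot (JacRel k Q W)

instance (W : Potential k Q) : Ring (Jac k Q W) := inferInstanceAs (Ring (RingQuot _))
instance (W : Potential k Q) : Algebra k (Jac k Q W) := inferInstanceAs (Algebra k (RingQuot _))

def jacMk (W : Potential k Q) : PathAlg k Q →ₐ[k] Jac k Q W :=
  RingQuot.mkAlgHom k (JacRel k Q W)

def Potential.memIdeal (W : Potential k Q) (x : PathAlg k Q) : Prop :=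
  jacMk k Q W x = 0

def loc (S : Set Q.A) : Quiv where
  V := Q.V
  A := Q.A ⊕ ↥S
  s := Sum.elim Q.s fun a => Q.t a.1
  t := Sum.elim Q.t fun a => Q.s a.1

inductive LocRel (S : Set Q.A) : PathAlg k (Q.loc S) → PathAlg k (Q.loc S) → Prop
  | inv_mul (a : ↥S) : LocRel S
      (arr k (Q.loc S) (Sum.inr a) * arr k (Q.loc S) (Sum.inl a.1))
      (vtx k (Q.loc S) (Q.s a.1))
  | mul_inv (a : ↥S) : LocRel S
      (arr k (Q.loc S) (Sum.inl a.1) * arr k (Q.loc S) (Sum.inr a))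
      (vtx k (Q.loc S) (Q.t a.1))

def LocAlg (S : Set Q.A) : Type := RingQuot (LocRel k Q S)

instance (S : Set Q.A) : Ring (LocAlg k Q S) := inferInstanceAs (Ring (RingQuot _))
instance (S : Set Q.A) : Algebra k (LocAlg k Q S) := inferInstanceAs (Algebra k (RingQuot _))

def locMk (S : Set Q.A) : PathAlg k (Q.loc S) →ₐ[k] LocAlg k Q S :=
  RingQuot.mkAlgHom k (LocRel k Q S)

def locVtx (S : Set Q.A) (i : Q.V) : LocAlg k Q S := locMk k Q S (vtx k (Q.loc S) i)

def locArr (S : Set Q.A) (x : (Q.loc S).A) : LocAlg k Q S := locMk k Q S (arr k (Q.loc S) x)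

def locProd (S : Set Q.A) (l : List (Q.loc S).A) : LocAlg k Q S :=
  locMk k Q S (pathOf k (Q.loc S) l)

inductive JacLRel (S : Set Q.A) (W : Potential k (Q.loc S)) :
    LocAlg k Q S → LocAlg k Q S → Prop
  | deriv (x : (Q.loc S).A) : JacLRel S W (locMk k Q S (Potential.deriv k (Q.loc S) W x)) 0

def JacL (S : Set Q.A) (W : Potential k (Q.loc S)) : Type := RingQuot (JacLRel k Q S W)

instance (S : Set Q.A) (W : Potential k (Q.loc S)) : Ring (JacL k Q S W) :=
  inferInstanceAs (Ring (RingQuot _))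
instance (S : Set Q.A) (W : Potential k (Q.loc S)) : Algebra k (JacL k Q S W) :=
  inferInstanceAs (Algebra k (RingQuot _))

def jacLMk (S : Set Q.A) (W : Potential k (Q.loc S)) : LocAlg k Q S →ₐ[k] JacL k Q S W :=
  RingQuot.mkAlgHom k (JacLRel k Q S W)

def memIdealL (S : Set Q.A) (W : Potential k (Q.loc S)) (x : LocAlg k Q S) : Prop :=
  jacLMk k Q S W x = 0

def locWeight (S : Set Q.A) (w : Q.A → ℤ) : (Q.loc S).A → ℤ :=
  Sum.elim w fun a => - w a.1

def degPart (S : Set Q.A) (w : Q.A → ℤ) (d : ℤ) : Submodule k (LocAlg k Q S) :=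
  Submodule.span k {x | (d = 0 ∧ ∃ i : Q.V, x = locVtx k Q S i) ∨
    ∃ l : List (Q.loc S).A, (l.map (locWeight Q S w)).sum = d ∧ x = locProd k Q S l}

structure Tiling where
  TV : Type
  [finTV : Fintype TV]
  isWhite : TV → Bool
  whiteOf : Q.A → TV
  blackOf : Q.A → TV
  whiteOf_white : ∀ a, isWhite (whiteOf a) = true
  blackOf_black : ∀ a, isWhite (blackOf a) = false
  cyc : TV → List Q.A
  cyc_isCycle : ∀ v, IsCycle Q (cyc v)
  cyc_nodup : ∀ v, (cyc v).Nodup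
  mem_cyc : ∀ v a, a ∈ cyc v ↔ whiteOf a = v ∨ blackOf a = v

attribute [instance] Tiling.finTV

def Tiling.potential (T : Tiling Q) : Potential k Q :=
  (Finset.univ (α := T.TV)).toList.map fun v =>
    ((if T.isWhite v then (1 : k) else -1), T.cyc v)

structure Aut where
  onV : Q.V ≃ Q.V
  onA : Q.A ≃ Q.A
  s_comm : ∀ a, Q.s (onA a) = onV (Q.s a)
  t_comm : ∀ a, Q.t (onA a) = onV (Q.t a)

structure TAut (T : Tiling Q) extends Aut Q where
  onTV : T.TV ≃ T.TV
  white_comm : ∀ v, T.isWhite (onTV v) = T.isWhite v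
  whiteOf_comm : ∀ a, T.whiteOf (onA a) = onTV (T.whiteOf a)
  blackOf_comm : ∀ a, T.blackOf (onA a) = onTV (T.blackOf a)
  cyc_comm : ∀ v, ∃ m, T.cyc (onTV v) = ((T.cyc v).map onA).rotate m

def Aut.OrderDvd (g : Aut Q) (n : ℕ) : Prop :=
  (∀ i, (⇑g.onV)^[n] i = i) ∧ (∀ a, (⇑g.onA)^[n] a = a)

def Aut.FreeVertexOrbits (g : Aut Q) (n : ℕ) : Prop :=
  ∀ i : Q.V, ∀ m, 0 < m → m < n → (⇑g.onV)^[m] i ≠ i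

structure OrbitChoice (g : Aut Q) where
  genArrow : Q.A → Q.A
  genArrow_orbit : ∀ a, ∃ m, (⇑g.onA)^[m] (genArrow a) = a
  genArrow_comm : ∀ a, genArrow (g.onA a) = genArrow a
  genArrow_idem : ∀ a, genArrow (genArrow a) = genArrow a
  repV : Q.V → Q.V
  repV_orbit : ∀ i, ∃ m, (⇑g.onV)^[m] (repV i) = i
  repV_comm : ∀ i, repV (g.onV i) = repV i
  repV_idem : ∀ i, repV (repV i) = repV i

def sharp (g : Aut Q) (n : ℕ) (C : OrbitChoice Q g) : Quiv where
  V := Q.V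
  A := {a : Q.A // C.genArrow a = a} ⊕ ({i : Q.V // C.repV i = i} × Fin (n - 1))
  s := Sum.elim (fun a => Q.s a.1) fun p => (⇑g.onV)^[p.2.1] p.1.1
  t := Sum.elim (fun a => Q.t a.1) fun p => (⇑g.onV)^[p.2.1 + 1] p.1.1

def isoSet (g : Aut Q) (n : ℕ) (C : OrbitChoice Q g) : Set (sharp Q g n C).A :=
  Set.range Sum.inr

variable (g : Aut Q) (n : ℕ) (C : OrbitChoice Q g)

/-- An isomorphism arrow, viewed as an arrow of the localised quiver. -/
def isoArrLoc (y : {i : Q.V // C.repV i = i} × Fin (n - 1)) :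
    ((sharp Q g n C).loc (isoSet Q g n C)).A :=
  Sum.inl (Sum.inr y)

/-- The inverse of an isomorphism arrow, viewed as an arrow of the localised
quiver. -/
def isoInvLoc (y : {i : Q.V // C.repV i = i} × Fin (n - 1)) :
    ((sharp Q g n C).loc (isoSet Q g n C)).A :=
  Sum.inr ⟨Sum.inr y, ⟨y, rfl⟩⟩

/-- The chosen generating arrow of the orbit of `a`, viewed as an arrow of the
localised quiver. -/
def genLoc (a : Q.A) : ((sharp Q g n C).loc (isoSet Q g n C)).A :=
  Sum.inl (Sum.inl ⟨C.genArrow a, C.genArrow_idem a⟩)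

/-- `l` consists solely of isomorphism arrows and their inverses. -/
def IsIsoList (l : List ((sharp Q g n C).loc (isoSet Q g n C)).A) : Prop :=
  ∀ x ∈ l, (∃ y, x = isoArrLoc Q g n C y) ∨ (∃ y, x = isoInvLoc Q g n C y)

/-- A choice, for every arrow `a` of `Q`, of the connecting paths `p_a` (from
`t(a_j)` to `t(a)`) and `q_a` (from `s(a)` to `s(a_j)`) composed solely of
isomorphism arrows and their inverses, where `a_j` is the chosen generating
arrow of the orbit of `a`. -/
structure ConnData where
  P : Q.A → List ((sharp Q g n C).loc (isoSet Q g n C)).A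
  Qc : Q.A → List ((sharp Q g n C).loc (isoSet Q g n C)).A
  isoP : ∀ a, IsIsoList Q g n C (P a)
  isoQc : ∀ a, IsIsoList Q g n C (Qc a)
  endP : ∀ a, IsPathFrom ((sharp Q g n C).loc (isoSet Q g n C)) (P a)
      (Q.t (C.genArrow a)) (Q.t a)
  endQc : ∀ a, IsPathFrom ((sharp Q g n C).loc (isoSet Q g n C)) (Qc a)
      (Q.s a) (Q.s (C.genArrow a))

/-- The image of an arrow `a` of `Q` under `ξ`, as a list of arrows of the
localised quiver: `p_a ⧺ [a_j] ⧺ q_a`. -/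
def xiArrList (cd : ConnData Q g n C) (a : Q.A) :
    List ((sharp Q g n C).loc (isoSet Q g n C)).A :=
  cd.P a ++ [genLoc Q g n C a] ++ cd.Qc a

/-- The image of a path of `Q` under `ξ`, as a list of arrows of the localised
quiver. -/
def xiList (cd : ConnData Q g n C) (l : List Q.A) :
    List ((sharp Q g n C).loc (isoSet Q g n C)).A :=
  l.flatMap (xiArrList Q g n C cd)

/-- The specification of the algebra homomorphism
`ξ : kQ → kQ'`: it sends constant paths to constant paths, and the arrow `a`
to `p_a a_j q_a`. -/
def XiSpec (cd : ConnData Q g n C)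
    (ξ : PathAlg k Q →ₐ[k] LocAlg k (sharp Q g n C) (isoSet Q g n C)) : Prop :=
  (∀ i : Q.V, ξ (vtx k Q i) = locVtx k (sharp Q g n C) (isoSet Q g n C) i) ∧
  ∀ a : Q.A, ξ (arr k Q a) =
    locProd k (sharp Q g n C) (isoSet Q g n C) (xiArrList Q g n C cd a)

/-- The potential `W' = ξ(W)` on the localised quiver induced by the potential
of a brane tiling. -/
def inducedPotential (T : Tiling Q) (cd : ConnData Q g n C) :
    Potential k ((sharp Q g n C).loc (isoSet Q g n C)) :=
  (Finset.univ (α := T.TV)).toList.map fun v =>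
    ((if T.isWhite v then (1 : k) else -1), xiList Q g n C cd (T.cyc v))

/-- The degree of arrows of `Q^#`: isomorphism arrows have degree `1`, the
generating arrows degree `0` (their formal inverses then get degree `-1`). -/
def sharpWeight : (sharp Q g n C).A → ℤ := Sum.elim (fun _ => 0) fun _ => 1

/-- The rotation of a cycle `l` placing the arrow `a` at the end. -/
def rotTo (l : List Q.A) (a : Q.A) : List Q.A := l.rotate (l.idxOf a + 1)

end Quiv
namespace Quiv

section Basic

variable {k : Type} [CommRing k] {Q : Quiv}

lemma mk_mul (x y : FreeAlgebra k (Q.V ⊕ Q.A)) :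
    (RingQuot.mkAlgHom k (PathRel k Q) x * RingQuot.mkAlgHom k (PathRel k Q) y :
      PathAlg k Q) = RingQuot.mkAlgHom k (PathRel k Q) (x * y) :=
  (map_mul _ _ _).symm

lemma vtx_mul_vtx (i j : Q.V) :
    vtx k Q i * vtx k Q j = if i = j then vtx k Q i else 0 := by
  simp only [vtx]
  refine (mk_mul _ _).trans ((RingQuot.mkAlgHom_rel k (PathRel.vertex_mul i j)).trans ?_)
  split_ifs
  · simp [*]
  · exact (map_zero _).trans (if_neg ‹_›).symm

lemma vtx_sum : (∑ i : Q.V, vtx k Q i) = 1 := by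
  have h : (∑ i : Q.V, vtx k Q i)
      = RingQuot.mkAlgHom k (PathRel k Q) (∑ i : Q.V, FreeAlgebra.ι k (Sum.inl i)) :=
    (map_sum _ _ _).symm
  rw [h, RingQuot.mkAlgHom_rel k (PathRel.vertex_sum)]
  exact map_one _

lemma vtx_mul_arr (a : Q.A) : vtx k Q (Q.t a) * arr k Q a = arr k Q a := by
  simp only [vtx, arr]
  exact (mk_mul _ _).trans (RingQuot.mkAlgHom_rel k (PathRel.target_mul a))

lemma arr_mul_vtx (a : Q.A) : arr k Q a * vtx k Q (Q.s a) = arr k Q a := by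
  simp only [vtx, arr]
  exact (mk_mul _ _).trans (RingQuot.mkAlgHom_rel k (PathRel.source_mul a))

lemma vtx_mul_self (i : Q.V) : vtx k Q i * vtx k Q i = vtx k Q i := by
  rw [vtx_mul_vtx, if_pos rfl]

/-- Lift a generator assignment satisfying the path algebra relations to an
algebra homomorphism out of the path algebra. -/
def pathAlgLift {A : Type} [Ring A] [Algebra k A] (fv : Q.V → A) (fa : Q.A → A)
    (h1 : ∀ i j, fv i * fv j = if i = j then fv i else 0)
    (h2 : (∑ i : Q.V, fv i) = 1)
    (h3 : ∀ a, fv (Q.t a) * fa a = fa a)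
    (h4 : ∀ a, fa a * fv (Q.s a) = fa a) :
    PathAlg k Q →ₐ[k] A :=
  RingQuot.liftAlgHom k ⟨FreeAlgebra.lift k (Sum.elim fv fa), by
    rintro x y ⟨i, j⟩
    · simp only [map_mul, FreeAlgebra.lift_ι_apply, Sum.elim_inl, h1]
      split_ifs <;> simp [FreeAlgebra.lift_ι_apply]
    · simp only [map_sum, FreeAlgebra.lift_ι_apply, Sum.elim_inl, h2, map_one]
    · simp only [map_mul, FreeAlgebra.lift_ι_apply, Sum.elim_inl, Sum.elim_inr]
      exact h3 _
    · simp only [map_mul, FreeAlgebra.lift_ι_apply, Sum.elim_inl, Sum.elim_inr]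
      exact h4 _⟩

@[simp] lemma pathAlgLift_vtx {A : Type} [Ring A] [Algebra k A] (fv : Q.V → A) (fa : Q.A → A)
    (h1 h2 h3 h4) (i : Q.V) :
    pathAlgLift fv fa h1 h2 h3 h4 (vtx k Q i) = fv i :=
  (RingQuot.liftAlgHom_mkAlgHom_apply k _ _ _).trans
    (by rw [FreeAlgebra.lift_ι_apply]; rfl)

@[simp] lemma pathAlgLift_arr {A : Type} [Ring A] [Algebra k A] (fv : Q.V → A) (fa : Q.A → A)
    (h1 h2 h3 h4) (a : Q.A) :
    pathAlgLift fv fa h1 h2 h3 h4 (arr k Q a) = fa a :=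
  (RingQuot.liftAlgHom_mkAlgHom_apply k _ _ _).trans
    (by rw [FreeAlgebra.lift_ι_apply]; rfl)

lemma pathAlg_hom_ext {A : Type} [Ring A] [Algebra k A]
    {f h : PathAlg k Q →ₐ[k] A}
    (hv : ∀ i, f (vtx k Q i) = h (vtx k Q i))
    (ha : ∀ a, f (arr k Q a) = h (arr k Q a)) : f = h := by
  have key : f.comp (RingQuot.mkAlgHom k (PathRel k Q))
      = h.comp (RingQuot.mkAlgHom k (PathRel k Q)) := by
    apply FreeAlgebra.hom_ext
    funext x
    rcases x with i | a
    · exact hv i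
    · exact ha a
  apply DFunLike.ext
  intro x
  obtain ⟨y, rfl⟩ := RingQuot.mkAlgHom_surjective k (PathRel k Q) x
  exact DFunLike.congr_fun key y

@[simp] lemma pathOf_nil : pathOf k Q [] = 1 := rfl

lemma pathOf_cons (x : Q.A) (l : List Q.A) :
    pathOf k Q (x :: l) = arr k Q x * pathOf k Q l := by
  simp [pathOf]

lemma pathOf_append (l₁ l₂ : List Q.A) :
    pathOf k Q (l₁ ++ l₂) = pathOf k Q l₁ * pathOf k Q l₂ := by
  simp [pathOf]

lemma vtx_mul_pathOf {l : List Q.A} (h : l ≠ []) {j : Q.V} (ht : Q.t (l.head h) = j) :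
    vtx k Q j * pathOf k Q l = pathOf k Q l := by
  cases l with
  | nil => exact absurd rfl h
  | cons x l' =>
      simp only [List.head_cons] at ht
      rw [pathOf_cons, ← mul_assoc, ← ht, vtx_mul_arr]

lemma pathOf_mul_vtx {l : List Q.A} (h : l ≠ []) {i : Q.V} (hs : Q.s (l.getLast h) = i) :
    pathOf k Q l * vtx k Q i = pathOf k Q l := by
  induction l with
  | nil => exact absurd rfl h
  | cons x l' ih =>
      cases l' with
      | nil =>
          simp only [List.getLast_singleton] at hs
          rw [pathOf_cons, pathOf_nil, mul_one, ← hs, arr_mul_vtx]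
      | cons y l'' =>
          rw [List.getLast_cons (by simp)] at hs
          rw [pathOf_cons, mul_assoc, ih (by simp) hs]

lemma isPathFrom_head {x : Q.A} {l : List Q.A} {i j : Q.V}
    (h : IsPathFrom Q (x :: l) i j) : Q.t x = j :=
  h.2.2.1 (by simp)

lemma isPathFrom_tail {x : Q.A} {l : List Q.A} {i j : Q.V}
    (h : IsPathFrom Q (x :: l) i j) : IsPathFrom Q l i (Q.s x) := by
  obtain ⟨hc, he, hh, hl⟩ := h
  refine ⟨(List.isChain_cons.mp hc).2, ?_, ?_, ?_⟩
  · rintro rfl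
    exact (hl (by simp)).symm
  · intro h'
    exact ((List.isChain_cons.mp hc).1 (l.head h')
      (Option.mem_def.mpr (List.head?_eq_head h'))).symm
  · intro h'
    have := hl (by simp)
    rwa [List.getLast_cons h'] at this

lemma iter_mod {α : Type*} (f : α → α) {n : ℕ} (hn : 0 < n) (hf : ∀ x, f^[n] x = x)
    (m : ℕ) (x : α) : f^[m] x = f^[m % n] x := by
  induction m using Nat.strong_induction_on with
  | _ m ih =>
    rcases lt_or_ge m n with h | h
    · rw [Nat.mod_eq_of_lt h]
    · have h1 : m - n + n = m := Nat.sub_add_cancel h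
      rw [Nat.mod_eq_sub_mod h, ← ih (m - n) (by omega)]
      conv_lhs => rw [← h1]
      rw [Function.iterate_add_apply, hf]

end Basic

end Quiv
namespace Quiv

section GhatSec

variable {Q : Quiv} (g : Aut Q)

lemma iter_t_comm (m : ℕ) (a : Q.A) :
    Q.t ((⇑g.onA)^[m] a) = (⇑g.onV)^[m] (Q.t a) := by
  induction m with
  | zero => rfl
  | succ m ih =>
      rw [Function.iterate_succ_apply', Function.iterate_succ_apply', g.t_comm, ih]

lemma iter_s_comm (m : ℕ) (a : Q.A) :
    Q.s ((⇑g.onA)^[m] a) = (⇑g.onV)^[m] (Q.s a) := by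
  induction m with
  | zero => rfl
  | succ m ih =>
      rw [Function.iterate_succ_apply', Function.iterate_succ_apply', g.s_comm, ih]

/-- The algebra endomorphism of the path algebra induced by the `m`-th power of
the quiver automorphism `g`. -/
def Ghat (m : ℕ) : PathAlg ℂ Q →ₐ[ℂ] PathAlg ℂ Q :=
  pathAlgLift (fun i => vtx ℂ Q ((⇑g.onV)^[m] i)) (fun a => arr ℂ Q ((⇑g.onA)^[m] a))
    (by
      intro i j
      rw [vtx_mul_vtx, (g.onV.injective.iterate m).eq_iff])
    (by
      rw [← vtx_sum (Q := Q)]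
      exact Fintype.sum_bijective _
        (Finite.injective_iff_bijective.mp (g.onV.injective.iterate m))
        _ _ (fun i => rfl))
    (by
      intro a
      show vtx ℂ Q ((⇑g.onV)^[m] (Q.t a)) * arr ℂ Q ((⇑g.onA)^[m] a) = _
      rw [← iter_t_comm, vtx_mul_arr])
    (by
      intro a
      show arr ℂ Q ((⇑g.onA)^[m] a) * vtx ℂ Q ((⇑g.onV)^[m] (Q.s a)) = _
      rw [← iter_s_comm, arr_mul_vtx])

@[simp] lemma Ghat_vtx (m : ℕ) (i : Q.V) :
    Ghat g m (vtx ℂ Q i) = vtx ℂ Q ((⇑g.onV)^[m] i) :=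
  pathAlgLift_vtx _ _ _ _ _ _ _

@[simp] lemma Ghat_arr (m : ℕ) (a : Q.A) :
    Ghat g m (arr ℂ Q a) = arr ℂ Q ((⇑g.onA)^[m] a) :=
  pathAlgLift_arr _ _ _ _ _ _ _

lemma Ghat_eq_of {m m' : ℕ}
    (hV : ∀ i, (⇑g.onV)^[m] i = (⇑g.onV)^[m'] i)
    (hA : ∀ a, (⇑g.onA)^[m] a = (⇑g.onA)^[m'] a) :
    Ghat g m = Ghat g m' :=
  pathAlg_hom_ext (by simp [hV]) (by simp [hA])

lemma Ghat_add (m m' : ℕ) (x : PathAlg ℂ Q) :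
    Ghat g (m + m') x = Ghat g m (Ghat g m' x) := by
  have h : Ghat g (m + m') = (Ghat g m).comp (Ghat g m') :=
    pathAlg_hom_ext (by simp [Function.iterate_add_apply])
      (by simp [Function.iterate_add_apply])
  rw [h]; rfl

lemma Ghat_zero (x : PathAlg ℂ Q) : Ghat g 0 x = x := by
  have h : Ghat g 0 = AlgHom.id ℂ (PathAlg ℂ Q) :=
    pathAlg_hom_ext (by simp) (by simp)
  rw [h]; rfl

variable (n : ℕ)

lemma Ghat_mod (hn : 0 < n) (horder : Aut.OrderDvd Q g n) (m : ℕ) :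
    Ghat g m = Ghat g (m % n) :=
  Ghat_eq_of g (fun i => iter_mod _ hn horder.1 m i) (fun a => iter_mod _ hn horder.2 m a)

lemma iterV_pred (hn : 0 < n) (horder : Aut.OrderDvd Q g n) (t : ℕ) (i : Q.V) :
    (⇑g.onV)^[n - 1] ((⇑g.onV)^[t + 1] i) = (⇑g.onV)^[t] i := by
  rw [← Function.iterate_add_apply]
  have h : n - 1 + (t + 1) = t + n := by omega
  rw [h, Function.iterate_add_apply, horder.1]

lemma onV_congr (hn : 0 < n) (horder : Aut.OrderDvd Q g n)
    (hfree : Aut.FreeVertexOrbits Q g n) {i : Q.V} {m m' : ℕ}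
    (h : (⇑g.onV)^[m] i = (⇑g.onV)^[m'] i) : m % n = m' % n := by
  have key : ∀ r r' : ℕ, r < n → r' < n → r ≤ r' →
      (⇑g.onV)^[r] i = (⇑g.onV)^[r'] i → r = r' := by
    intro r r' hr hr' hle heq
    by_contra hne
    have h0 : 0 < r' - r := by omega
    have h1 : r' - r < n := by omega
    have h2 : (⇑g.onV)^[r' - r] ((⇑g.onV)^[r] i) = (⇑g.onV)^[r] i := by
      rw [← Function.iterate_add_apply]
      have : r' - r + r = r' := by omega
      rw [this, heq]
    exact hfree _ _ h0 h1 h2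
  have h' : (⇑g.onV)^[m % n] i = (⇑g.onV)^[m' % n] i := by
    rw [← iter_mod _ hn horder.1, ← iter_mod _ hn horder.1, h]
  rcases le_total (m % n) (m' % n) with hle | hle
  · exact key _ _ (Nat.mod_lt _ hn) (Nat.mod_lt _ hn) hle h'
  · exact (key _ _ (Nat.mod_lt _ hn) (Nat.mod_lt _ hn) hle h'.symm).symm

/-- Left multiplication, as an endomorphism of the path algebra. -/
def lm (x : PathAlg ℂ Q) : Module.End ℂ (PathAlg ℂ Q) := Algebra.lmul ℂ _ x

@[simp] lemma lm_apply (x y : PathAlg ℂ Q) : lm x y = x * y := rfl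

lemma lm_mul (x y : PathAlg ℂ Q) : lm (x * y) = lm x * lm y := by
  ext z; simp [mul_assoc]

lemma GhatEnd_mul_lm (m : ℕ) (x : PathAlg ℂ Q) :
    (Ghat g m).toLinearMap * lm x = lm (Ghat g m x) * (Ghat g m).toLinearMap := by
  ext z; simp [Module.End.mul_apply]

lemma GhatEnd_mul (m m' : ℕ) :
    (Ghat g m).toLinearMap * (Ghat g m').toLinearMap = (Ghat g (m + m')).toLinearMap := by
  ext z; simp [Module.End.mul_apply, Ghat_add]

lemma GhatEnd_n (hn : 0 < n) (horder : Aut.OrderDvd Q g n) :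
    (Ghat g n).toLinearMap = 1 := by
  ext z
  simp only [AlgHom.toLinearMap_apply, Module.End.one_apply]
  rw [Ghat_mod g n hn horder, Nat.mod_self, Ghat_zero]

end GhatSec

end Quiv
namespace Quiv

section Theta

variable {Q : Quiv} (g : Aut Q) (n : ℕ) (C : OrbitChoice Q g)

/-- Value of the representation on the formal-inverse arrows. -/
def FAinv : (sharp Q g n C).A → Module.End ℂ (PathAlg ℂ Q) :=
  Sum.elim (fun _ => 0)
    (fun y => lm (vtx ℂ Q ((⇑g.onV)^[y.2.1] y.1.1)) * (Ghat g (n - 1)).toLinearMap)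

/-- Value of the representation on the arrows of the localised quiver. -/
def FA : ((sharp Q g n C).loc (isoSet Q g n C)).A → Module.End ℂ (PathAlg ℂ Q) :=
  Sum.elim
    (Sum.elim (fun a => lm (arr ℂ Q a.1))
      (fun y => lm (vtx ℂ Q ((⇑g.onV)^[y.2.1 + 1] y.1.1)) * (Ghat g 1).toLinearMap))
    (fun s => FAinv g n C s.1)

@[simp] lemma FA_gen (b : {a : Q.A // C.genArrow a = a}) :
    FA g n C (Sum.inl (Sum.inl b)) = lm (arr ℂ Q b.1) := rfl

@[simp] lemma FA_iso (y : {i : Q.V // C.repV i = i} × Fin (n - 1)) :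
    FA g n C (Sum.inl (Sum.inr y)) =
      lm (vtx ℂ Q ((⇑g.onV)^[y.2.1 + 1] y.1.1)) * (Ghat g 1).toLinearMap := rfl

@[simp] lemma FA_inv (y : {i : Q.V // C.repV i = i} × Fin (n - 1)) (hx) :
    FA g n C (Sum.inr ⟨Sum.inr y, hx⟩) =
      lm (vtx ℂ Q ((⇑g.onV)^[y.2.1] y.1.1)) * (Ghat g (n - 1)).toLinearMap := rfl

lemma iter_one_succ (t : ℕ) (i : Q.V) :
    (⇑g.onV)^[1] ((⇑g.onV)^[t] i) = (⇑g.onV)^[t + 1] i := by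
  rw [← Function.iterate_add_apply, Nat.add_comm]

/-- The representation of the path algebra of the localised quiver on the path
algebra of `Q`. -/
def theta0 (hn : 0 < n) (horder : Aut.OrderDvd Q g n) : PathAlg ℂ ((sharp Q g n C).loc (isoSet Q g n C)) →ₐ[ℂ]
    Module.End ℂ (PathAlg ℂ Q) :=
  pathAlgLift (fun i => lm (vtx ℂ Q i)) (FA g n C)
    (by
      intro (i : Q.V) (j : Q.V)
      show lm (vtx ℂ Q i) * lm (vtx ℂ Q j) = _
      rw [← lm_mul, vtx_mul_vtx]
      by_cases h : i = j
      · subst h; exact Eq.trans (congrArg lm (if_pos rfl)) (if_pos rfl).symm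
      · have h' : ¬ @Eq ((sharp Q g n C).loc (isoSet Q g n C)).V i j := h
        simp only [if_neg h, if_neg h']
        exact map_zero (Algebra.lmul ℂ (PathAlg ℂ Q)))
    (by
      show (∑ i : Q.V, lm (vtx ℂ Q i)) = 1
      have h : (∑ i : Q.V, lm (vtx ℂ Q i)) = Algebra.lmul ℂ _ (∑ i : Q.V, vtx ℂ Q i) :=
        (map_sum _ _ _).symm
      rw [h, vtx_sum, map_one])
    (by
      rintro ((b | y) | s)
      · show lm (vtx ℂ Q (Q.t b.1)) * lm (arr ℂ Q b.1) = lm (arr ℂ Q b.1)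
        rw [← lm_mul, vtx_mul_arr]
      · show lm (vtx ℂ Q ((⇑g.onV)^[y.2.1 + 1] y.1.1)) *
            (lm (vtx ℂ Q ((⇑g.onV)^[y.2.1 + 1] y.1.1)) * (Ghat g 1).toLinearMap) = _
        rw [← mul_assoc, ← lm_mul, vtx_mul_self]
        exact (FA_iso g n C y).symm
      · obtain ⟨x, hx⟩ := s
        rcases x with b | y
        · exact absurd hx (by simp [isoSet]; rintro ⟨y, hy⟩; cases hy)
        · show lm (vtx ℂ Q ((⇑g.onV)^[y.2.1] y.1.1)) *
              (lm (vtx ℂ Q ((⇑g.onV)^[y.2.1] y.1.1)) * (Ghat g (n - 1)).toLinearMap) = _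
          rw [← mul_assoc, ← lm_mul, vtx_mul_self]
          exact (FA_inv g n C y hx).symm)
    (by
      rintro ((b | y) | s)
      · show lm (arr ℂ Q b.1) * lm (vtx ℂ Q (Q.s b.1)) = lm (arr ℂ Q b.1)
        rw [← lm_mul, arr_mul_vtx]
      · show lm (vtx ℂ Q ((⇑g.onV)^[y.2.1 + 1] y.1.1)) * (Ghat g 1).toLinearMap *
            lm (vtx ℂ Q ((⇑g.onV)^[y.2.1] y.1.1)) = _
        rw [mul_assoc, GhatEnd_mul_lm, Ghat_vtx, iter_one_succ, ← mul_assoc, ← lm_mul,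
          vtx_mul_self]
        exact (FA_iso g n C y).symm
      · obtain ⟨x, hx⟩ := s
        rcases x with b | y
        · exact absurd hx (by simp [isoSet]; rintro ⟨y, hy⟩; cases hy)
        · show lm (vtx ℂ Q ((⇑g.onV)^[y.2.1] y.1.1)) * (Ghat g (n - 1)).toLinearMap *
              lm (vtx ℂ Q ((⇑g.onV)^[y.2.1 + 1] y.1.1)) = _
          rw [mul_assoc, GhatEnd_mul_lm, Ghat_vtx, iterV_pred g n hn horder, ← mul_assoc,
            ← lm_mul, vtx_mul_self]
          exact (FA_inv g n C y hx).symm)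

@[simp] lemma theta0_vtx (hn : 0 < n) (horder : Aut.OrderDvd Q g n) (i : Q.V) :
    theta0 g n C hn horder (vtx ℂ ((sharp Q g n C).loc (isoSet Q g n C)) i) =
      lm (vtx ℂ Q i) :=
  pathAlgLift_vtx _ _ _ _ _ _ _

@[simp] lemma theta0_arr (hn : 0 < n) (horder : Aut.OrderDvd Q g n) (x : ((sharp Q g n C).loc (isoSet Q g n C)).A) :
    theta0 g n C hn horder (arr ℂ ((sharp Q g n C).loc (isoSet Q g n C)) x) =
      FA g n C x :=
  pathAlgLift_arr _ _ _ _ _ _ _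

/-- The representation of the localised path algebra on the path algebra of
`Q`. -/
def theta (hn : 0 < n) (horder : Aut.OrderDvd Q g n) : LocAlg ℂ (sharp Q g n C) (isoSet Q g n C) →ₐ[ℂ]
    Module.End ℂ (PathAlg ℂ Q) :=
  RingQuot.liftAlgHom ℂ ⟨theta0 g n C hn horder, by
    rintro x y (⟨a⟩ | ⟨a⟩)
    · -- inv_mul
      obtain ⟨x0, hx0⟩ := a
      rcases x0 with b | y0
      · exact absurd hx0 (by simp [isoSet]; rintro ⟨y, hy⟩; cases hy)
      · rw [map_mul, theta0_arr g n C hn horder (Sum.inr ⟨Sum.inr y0, hx0⟩),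
          theta0_arr g n C hn horder (Sum.inl (⟨Sum.inr y0, hx0⟩ : isoSet Q g n C).1)]
        have hv : theta0 g n C hn horder
            (vtx ℂ ((sharp Q g n C).loc (isoSet Q g n C))
              ((sharp Q g n C).s (Sum.inr y0))) = lm (vtx ℂ Q ((⇑g.onV)^[y0.2.1] y0.1.1)) :=
          theta0_vtx g n C hn horder _
        rw [hv]
        show lm (vtx ℂ Q ((⇑g.onV)^[y0.2.1] y0.1.1)) * (Ghat g (n - 1)).toLinearMap *
            (lm (vtx ℂ Q ((⇑g.onV)^[y0.2.1 + 1] y0.1.1)) * (Ghat g 1).toLinearMap) = _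
        rw [mul_assoc, ← mul_assoc ((Ghat g (n - 1)).toLinearMap), GhatEnd_mul_lm,
          Ghat_vtx, iterV_pred g n hn horder, mul_assoc, GhatEnd_mul,
          (by omega : n - 1 + 1 = n), GhatEnd_n g n hn horder, mul_one,
          ← lm_mul, vtx_mul_self]
    · -- mul_inv
      obtain ⟨x0, hx0⟩ := a
      rcases x0 with b | y0
      · exact absurd hx0 (by simp [isoSet]; rintro ⟨y, hy⟩; cases hy)
      · rw [map_mul, theta0_arr g n C hn horder (Sum.inr ⟨Sum.inr y0, hx0⟩),
          theta0_arr g n C hn horder (Sum.inl (⟨Sum.inr y0, hx0⟩ : isoSet Q g n C).1)]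
        have hv : theta0 g n C hn horder
            (vtx ℂ ((sharp Q g n C).loc (isoSet Q g n C))
              ((sharp Q g n C).t (Sum.inr y0))) =
            lm (vtx ℂ Q ((⇑g.onV)^[y0.2.1 + 1] y0.1.1)) :=
          theta0_vtx g n C hn horder _
        rw [hv]
        show lm (vtx ℂ Q ((⇑g.onV)^[y0.2.1 + 1] y0.1.1)) * (Ghat g 1).toLinearMap *
            (lm (vtx ℂ Q ((⇑g.onV)^[y0.2.1] y0.1.1)) * (Ghat g (n - 1)).toLinearMap) = _
        rw [mul_assoc, ← mul_assoc ((Ghat g 1).toLinearMap), GhatEnd_mul_lm,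
          Ghat_vtx, iter_one_succ, mul_assoc, GhatEnd_mul,
          (by omega : 1 + (n - 1) = n), GhatEnd_n g n hn horder, mul_one,
          ← lm_mul, vtx_mul_self]⟩

lemma theta_mk (hn : 0 < n) (horder : Aut.OrderDvd Q g n) (x : PathAlg ℂ ((sharp Q g n C).loc (isoSet Q g n C))) :
    theta g n C hn horder (locMk ℂ (sharp Q g n C) (isoSet Q g n C) x) =
      theta0 g n C hn horder x :=
  RingQuot.liftAlgHom_mkAlgHom_apply _ _ _ _

end Theta

end Quiv
namespace Quiv

section Eval

variable {Q : Quiv} (g : Aut Q) (n : ℕ) (C : OrbitChoice Q g)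

@[simp] lemma FA_isoArr (y : {i : Q.V // C.repV i = i} × Fin (n - 1)) :
    FA g n C (isoArrLoc Q g n C y) =
      lm (vtx ℂ Q ((⇑g.onV)^[y.2.1 + 1] y.1.1)) * (Ghat g 1).toLinearMap := rfl

@[simp] lemma FA_isoInv (y : {i : Q.V // C.repV i = i} × Fin (n - 1)) :
    FA g n C (isoInvLoc Q g n C y) =
      lm (vtx ℂ Q ((⇑g.onV)^[y.2.1] y.1.1)) * (Ghat g (n - 1)).toLinearMap := rfl

/-- Absorption of the source idempotent, one arrow at a time. -/
lemma lemB (hn : 0 < n) (horder : Aut.OrderDvd Q g n)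
    (x : ((sharp Q g n C).loc (isoSet Q g n C)).A) (z : PathAlg ℂ Q) :
    FA g n C x
      (vtx ℂ Q (((sharp Q g n C).loc (isoSet Q g n C)).s x) * z) = FA g n C x z := by
  rcases x with (b | y) | ⟨x0, hx0⟩
  · show arr ℂ Q b.1 * (vtx ℂ Q (Q.s b.1) * z) = arr ℂ Q b.1 * z
    rw [← mul_assoc, arr_mul_vtx]
  · show vtx ℂ Q ((⇑g.onV)^[y.2.1 + 1] y.1.1) *
        (Ghat g 1) (vtx ℂ Q ((⇑g.onV)^[y.2.1] y.1.1) * z) =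
      vtx ℂ Q ((⇑g.onV)^[y.2.1 + 1] y.1.1) * (Ghat g 1) z
    rw [map_mul, Ghat_vtx, iter_one_succ, ← mul_assoc, vtx_mul_self]
  · rcases x0 with b | y
    · exact absurd hx0 (by simp [isoSet]; rintro ⟨y, hy⟩; cases hy)
    · show vtx ℂ Q ((⇑g.onV)^[y.2.1] y.1.1) *
          (Ghat g (n - 1)) (vtx ℂ Q ((⇑g.onV)^[y.2.1 + 1] y.1.1) * z) =
        vtx ℂ Q ((⇑g.onV)^[y.2.1] y.1.1) * (Ghat g (n - 1)) z
      rw [map_mul, Ghat_vtx, iterV_pred g n hn horder, ← mul_assoc, vtx_mul_self]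

lemma theta0_single (hn : 0 < n) (horder : Aut.OrderDvd Q g n)
    (x : ((sharp Q g n C).loc (isoSet Q g n C)).A) (z : PathAlg ℂ Q) :
    theta0 g n C hn horder (pathOf ℂ ((sharp Q g n C).loc (isoSet Q g n C)) [x]) z =
      FA g n C x z := by
  rw [pathOf_cons, pathOf_nil, mul_one, theta0_arr]

lemma theta0_cons (hn : 0 < n) (horder : Aut.OrderDvd Q g n)
    (x : ((sharp Q g n C).loc (isoSet Q g n C)).A)
    (l : List ((sharp Q g n C).loc (isoSet Q g n C)).A) (z : PathAlg ℂ Q) :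
    theta0 g n C hn horder (pathOf ℂ ((sharp Q g n C).loc (isoSet Q g n C)) (x :: l)) z =
      FA g n C x
        (theta0 g n C hn horder (pathOf ℂ ((sharp Q g n C).loc (isoSet Q g n C)) l) z) := by
  rw [pathOf_cons, map_mul, Module.End.mul_apply, theta0_arr]

/-- Absorption of the source idempotent for paths. -/
lemma lemC (hn : 0 < n) (horder : Aut.OrderDvd Q g n)
    {l : List ((sharp Q g n C).loc (isoSet Q g n C)).A} {i j : Q.V}
    (hp : IsPathFrom ((sharp Q g n C).loc (isoSet Q g n C)) l i j) (h : l ≠ [])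
    (z : PathAlg ℂ Q) :
    theta0 g n C hn horder (pathOf ℂ ((sharp Q g n C).loc (isoSet Q g n C)) l) z =
      theta0 g n C hn horder (pathOf ℂ ((sharp Q g n C).loc (isoSet Q g n C)) l)
        (vtx ℂ Q i * z) := by
  induction l generalizing j z with
  | nil => exact absurd rfl h
  | cons x l' ih =>
      cases l' with
      | nil =>
          have hs : ((sharp Q g n C).loc (isoSet Q g n C)).s x = i := hp.2.2.2 (by simp)
          rw [theta0_single, theta0_single, ← hs, lemB g n C hn horder]
      | cons y l'' =>
          have hp' := isPathFrom_tail hp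
          rw [theta0_cons g n C hn horder x (y :: l'') z, ih hp' (by simp) z,
            theta0_cons g n C hn horder x (y :: l'') (vtx ℂ Q i * z)]

/-- Multiplying by the target vertex idempotent after applying `Ghat`. -/
lemma vtx_absorb (m : ℕ) (i j : Q.V) (z : PathAlg ℂ Q) (hm : (⇑g.onV)^[m] i = j) :
    vtx ℂ Q j * Ghat g m (vtx ℂ Q i * z) = Ghat g m (vtx ℂ Q i * z) := by
  rw [map_mul, Ghat_vtx, hm, ← mul_assoc, vtx_mul_self]

/-- Evaluation of the representation on paths of isomorphism arrows. -/
lemma lemA (hn : 0 < n) (horder : Aut.OrderDvd Q g n)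
    {l : List ((sharp Q g n C).loc (isoSet Q g n C)).A}
    (hiso : IsIsoList Q g n C l) {i j : Q.V}
    (hp : IsPathFrom ((sharp Q g n C).loc (isoSet Q g n C)) l i j) :
    ∃ m : ℕ, (⇑g.onV)^[m] i = j ∧ ∀ z : PathAlg ℂ Q,
      theta0 g n C hn horder (pathOf ℂ ((sharp Q g n C).loc (isoSet Q g n C)) l)
          (vtx ℂ Q i * z) = Ghat g m (vtx ℂ Q i * z) := by
  induction l generalizing j with
  | nil =>
      refine ⟨0, ?_, fun z => ?_⟩
      · exact hp.2.1 rfl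
      · rw [pathOf_nil, map_one, Module.End.one_apply, Ghat_zero]
  | cons x l' ih =>
      have hp' := isPathFrom_tail hp
      have hj : ((sharp Q g n C).loc (isoSet Q g n C)).t x = j := isPathFrom_head hp
      have hiso' : IsIsoList Q g n C l' := fun y hy => hiso y (List.mem_cons_of_mem _ hy)
      obtain ⟨m', hm', hz'⟩ := ih hiso' hp'
      rcases hiso x List.mem_cons_self with ⟨y, rfl⟩ | ⟨y, rfl⟩
      · -- isomorphism arrow
        have hs : (⇑g.onV)^[m'] i = (⇑g.onV)^[y.2.1] y.1.1 := hm'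
        have hj' : (⇑g.onV)^[y.2.1 + 1] y.1.1 = j := hj
        have hm : (⇑g.onV)^[m' + 1] i = j := by
          rw [← hj']
          have h2 : (⇑g.onV)^[m' + 1] i = (⇑g.onV)^[1] ((⇑g.onV)^[m'] i) := by
            rw [Nat.add_comm, Function.iterate_add_apply]
          rw [h2, hs, iter_one_succ]
        refine ⟨m' + 1, hm, fun z => ?_⟩
        rw [theta0_cons, hz' z, FA_isoArr, Module.End.mul_apply, AlgHom.toLinearMap_apply,
          lm_apply, ← Ghat_add g 1 m', Nat.add_comm 1 m', hj']
        exact vtx_absorb g (m' + 1) i j z hm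
      · -- inverse isomorphism arrow
        have hs : (⇑g.onV)^[m'] i = (⇑g.onV)^[y.2.1 + 1] y.1.1 := hm'
        have hj' : (⇑g.onV)^[y.2.1] y.1.1 = j := hj
        have hm : (⇑g.onV)^[m' + (n - 1)] i = j := by
          rw [← hj', Nat.add_comm m' (n - 1), Function.iterate_add_apply, hs,
            iterV_pred g n hn horder]
        refine ⟨m' + (n - 1), hm, fun z => ?_⟩
        rw [theta0_cons, hz' z, FA_isoInv, Module.End.mul_apply, AlgHom.toLinearMap_apply,
          lm_apply, ← Ghat_add g (n - 1) m', Nat.add_comm (n - 1) m', hj']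
        exact vtx_absorb g (m' + (n - 1)) i j z hm

end Eval

end Quiv
namespace Quiv

section Xi

variable {Q : Quiv} (g : Aut Q) (n : ℕ) (C : OrbitChoice Q g)

lemma theta0_append (hn : 0 < n) (horder : Aut.OrderDvd Q g n)
    (l1 l2 : List ((sharp Q g n C).loc (isoSet Q g n C)).A) (z : PathAlg ℂ Q) :
    theta0 g n C hn horder
        (pathOf ℂ ((sharp Q g n C).loc (isoSet Q g n C)) (l1 ++ l2)) z =
      theta0 g n C hn horder (pathOf ℂ ((sharp Q g n C).loc (isoSet Q g n C)) l1)
        (theta0 g n C hn horder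
          (pathOf ℂ ((sharp Q g n C).loc (isoSet Q g n C)) l2) z) := by
  rw [pathOf_append, map_mul, Module.End.mul_apply]

variable (cd : ConnData Q g n C)

lemma xiArrList_ne_nil (a : Q.A) : xiArrList Q g n C cd a ≠ [] := by
  simp [xiArrList]

lemma xi_target (a : Q.A) :
    vtx ℂ ((sharp Q g n C).loc (isoSet Q g n C)) (Q.t a) *
        pathOf ℂ ((sharp Q g n C).loc (isoSet Q g n C)) (xiArrList Q g n C cd a) =
      pathOf ℂ ((sharp Q g n C).loc (isoSet Q g n C)) (xiArrList Q g n C cd a) := by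
  refine vtx_mul_pathOf (xiArrList_ne_nil g n C cd a) ?_
  rcases hPa : cd.P a with _ | ⟨p0, ps⟩
  · have h1 : Q.t (C.genArrow a) = Q.t a := (cd.endP a).2.1 hPa
    have hhd : (xiArrList Q g n C cd a).head (xiArrList_ne_nil g n C cd a) =
        genLoc Q g n C a := by simp [xiArrList, hPa]
    rw [hhd]; exact h1
  · have hne' : cd.P a ≠ [] := by simp [hPa]
    have hhd : (xiArrList Q g n C cd a).head (xiArrList_ne_nil g n C cd a) =
        (cd.P a).head hne' := by simp [xiArrList, hPa]
    rw [hhd]; exact (cd.endP a).2.2.1 hne'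

lemma xi_source (a : Q.A) :
    pathOf ℂ ((sharp Q g n C).loc (isoSet Q g n C)) (xiArrList Q g n C cd a) *
        vtx ℂ ((sharp Q g n C).loc (isoSet Q g n C)) (Q.s a) =
      pathOf ℂ ((sharp Q g n C).loc (isoSet Q g n C)) (xiArrList Q g n C cd a) := by
  refine pathOf_mul_vtx (xiArrList_ne_nil g n C cd a) ?_
  rcases hQc : cd.Qc a with _ | ⟨q0, qs⟩
  · have h1 : Q.s a = Q.s (C.genArrow a) := (cd.endQc a).2.1 hQc
    have hlast : (xiArrList Q g n C cd a).getLast (xiArrList_ne_nil g n C cd a) =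
        genLoc Q g n C a := by
      simp [xiArrList, hQc, List.getLast_append_singleton]
    rw [hlast]; exact h1.symm
  · have hne' : cd.Qc a ≠ [] := by simp [hQc]
    have hlast : (xiArrList Q g n C cd a).getLast (xiArrList_ne_nil g n C cd a) =
        (cd.Qc a).getLast hne' := by
      simp [xiArrList, hQc]
    rw [hlast]; exact (cd.endQc a).2.2.2 hne'

/-- The algebra homomorphism `ξ : ℂQ → ℂQ'`. -/
def xi : PathAlg ℂ Q →ₐ[ℂ] LocAlg ℂ (sharp Q g n C) (isoSet Q g n C) :=
  pathAlgLift (fun i => locVtx ℂ (sharp Q g n C) (isoSet Q g n C) i)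
    (fun a => locProd ℂ (sharp Q g n C) (isoSet Q g n C) (xiArrList Q g n C cd a))
    (by
      intro i j
      have e : locVtx ℂ (sharp Q g n C) (isoSet Q g n C) i *
          locVtx ℂ (sharp Q g n C) (isoSet Q g n C) j =
          locMk ℂ (sharp Q g n C) (isoSet Q g n C)
            (vtx ℂ ((sharp Q g n C).loc (isoSet Q g n C)) i *
              vtx ℂ ((sharp Q g n C).loc (isoSet Q g n C)) j) := (map_mul _ _ _).symm
      rw [e, vtx_mul_vtx (Q := (sharp Q g n C).loc (isoSet Q g n C)) i j]
      by_cases h : i = j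
      · subst h
        exact Eq.trans (congrArg (locMk ℂ (sharp Q g n C) (isoSet Q g n C)) (if_pos rfl))
          (if_pos rfl).symm
      · have h' : ¬ @Eq ((sharp Q g n C).loc (isoSet Q g n C)).V i j := h
        simp only [if_neg h, if_neg h']
        exact map_zero (locMk ℂ (sharp Q g n C) (isoSet Q g n C)))
    (by
      show (∑ i : ((sharp Q g n C).loc (isoSet Q g n C)).V,
        locVtx ℂ (sharp Q g n C) (isoSet Q g n C) i) = 1
      have e : (∑ i : ((sharp Q g n C).loc (isoSet Q g n C)).V,
          locVtx ℂ (sharp Q g n C) (isoSet Q g n C) i) =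
          locMk ℂ (sharp Q g n C) (isoSet Q g n C)
            (∑ i : ((sharp Q g n C).loc (isoSet Q g n C)).V,
              vtx ℂ ((sharp Q g n C).loc (isoSet Q g n C)) i) := (map_sum _ _ _).symm
      rw [e, vtx_sum, map_one])
    (by
      intro a
      have e : locVtx ℂ (sharp Q g n C) (isoSet Q g n C) (Q.t a) *
          locProd ℂ (sharp Q g n C) (isoSet Q g n C) (xiArrList Q g n C cd a) =
          locMk ℂ (sharp Q g n C) (isoSet Q g n C)
            (vtx ℂ ((sharp Q g n C).loc (isoSet Q g n C)) (Q.t a) *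
              pathOf ℂ ((sharp Q g n C).loc (isoSet Q g n C)) (xiArrList Q g n C cd a)) :=
        (map_mul _ _ _).symm
      rw [e, xi_target g n C cd a]
      rfl)
    (by
      intro a
      have e : locProd ℂ (sharp Q g n C) (isoSet Q g n C) (xiArrList Q g n C cd a) *
          locVtx ℂ (sharp Q g n C) (isoSet Q g n C) (Q.s a) =
          locMk ℂ (sharp Q g n C) (isoSet Q g n C)
            (pathOf ℂ ((sharp Q g n C).loc (isoSet Q g n C)) (xiArrList Q g n C cd a) *
              vtx ℂ ((sharp Q g n C).loc (isoSet Q g n C)) (Q.s a)) :=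
        (map_mul _ _ _).symm
      rw [e, xi_source g n C cd a]
      rfl)

@[simp] lemma xi_vtx (i : Q.V) :
    xi g n C cd (vtx ℂ Q i) = locVtx ℂ (sharp Q g n C) (isoSet Q g n C) i :=
  pathAlgLift_vtx _ _ _ _ _ _ _

@[simp] lemma xi_arr (a : Q.A) :
    xi g n C cd (arr ℂ Q a) =
      locProd ℂ (sharp Q g n C) (isoSet Q g n C) (xiArrList Q g n C cd a) :=
  pathAlgLift_arr _ _ _ _ _ _ _

end Xi

end Quiv

open Quiv in
/-- With `Q` the dual quiver of a brane tiling preserved by an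
orientation-preserving automorphism `φ` of order `n` of the surface (with all
vertex orbits of size `n`), and `ℂQ'` the localisation of the path algebra of
`Q^#` at the isomorphism arrows, the map `ξ : ℂQ → ℂQ'` sending each constant
path `e_i` to `e_i` and each arrow `a` to `p_a a_j q_a` (where `a_j` is the
chosen generating arrow of the orbit of `a`, and `p_a : t(a_j) → t(a)`,
`q_a : s(a) → s(a_j)` are the connecting paths composed solely of isomorphism
arrows or their inverses) is a well-defined injective algebra homomorphism. -/
theorem statement_3 (Q : Quiv) (T : Quiv.Tiling Q) (g : Quiv.TAut Q T) (n : ℕ)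
    (hn : 0 < n)
    (horder : Quiv.Aut.OrderDvd Q g.toAut n)
    (horderTV : ∀ v, (⇑g.onTV)^[n] v = v)
    (hfree : Quiv.Aut.FreeVertexOrbits Q g.toAut n)
    (C : Quiv.OrbitChoice Q g.toAut)
    (cd : Quiv.ConnData Q g.toAut n C) :
    ∃ ξ : PathAlg ℂ Q →ₐ[ℂ]
        LocAlg ℂ (sharp Q g.toAut n C) (isoSet Q g.toAut n C),
      XiSpec ℂ Q g.toAut n C cd ξ ∧ Function.Injective ξ := by

  classical
  refine ⟨Quiv.xi g.toAut n C cd, ⟨fun i => Quiv.xi_vtx g.toAut n C cd i,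
    fun a => Quiv.xi_arr g.toAut n C cd a⟩, ?_⟩
  -- Injectivity: we show that `theta ∘ xi` is left multiplication.
  have hcomp : (Quiv.theta g.toAut n C hn horder).comp (Quiv.xi g.toAut n C cd) =
      Algebra.lmul ℂ (PathAlg ℂ Q) := by
    apply Quiv.pathAlg_hom_ext
    · intro i
      rw [AlgHom.comp_apply, Quiv.xi_vtx]
      have e : Quiv.theta g.toAut n C hn horder
          (locVtx ℂ (sharp Q g.toAut n C) (isoSet Q g.toAut n C) i) =
          Quiv.theta0 g.toAut n C hn horder
            (vtx ℂ ((sharp Q g.toAut n C).loc (isoSet Q g.toAut n C)) i) :=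
        Quiv.theta_mk g.toAut n C hn horder _
      rw [e, Quiv.theta0_vtx]
      rfl
    · intro a
      rw [AlgHom.comp_apply, Quiv.xi_arr]
      have e : Quiv.theta g.toAut n C hn horder
          (locProd ℂ (sharp Q g.toAut n C) (isoSet Q g.toAut n C)
            (xiArrList Q g.toAut n C cd a)) =
          Quiv.theta0 g.toAut n C hn horder
            (pathOf ℂ ((sharp Q g.toAut n C).loc (isoSet Q g.toAut n C))
              (xiArrList Q g.toAut n C cd a)) :=
        Quiv.theta_mk g.toAut n C hn horder _
      rw [e]
      apply LinearMap.ext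
      intro z
      obtain ⟨ma, hma⟩ := C.genArrow_orbit a
      have hta : Q.t a = (⇑g.onV)^[ma] (Q.t (C.genArrow a)) := by
        conv_lhs => rw [← hma]
        rw [Quiv.iter_t_comm g.toAut]
      have hsa : Q.s a = (⇑g.onV)^[ma] (Q.s (C.genArrow a)) := by
        conv_lhs => rw [← hma]
        rw [Quiv.iter_s_comm g.toAut]
      -- the Qc part
      have hQ : ∃ mq : ℕ, (⇑g.onV)^[mq] (Q.s a) = Q.s (C.genArrow a) ∧
          arr ℂ Q (C.genArrow a) * Quiv.theta0 g.toAut n C hn horder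
              (pathOf ℂ ((sharp Q g.toAut n C).loc (isoSet Q g.toAut n C)) (cd.Qc a)) z =
            arr ℂ Q (C.genArrow a) * Quiv.Ghat g.toAut mq (vtx ℂ Q (Q.s a) * z) := by
        rcases hQc : cd.Qc a with _ | ⟨q0, qs⟩
        · have h0 : Q.s a = Q.s (C.genArrow a) := (cd.endQc a).2.1 hQc
          refine ⟨0, by simpa using h0, ?_⟩
          rw [Quiv.pathOf_nil, map_one, Module.End.one_apply, Quiv.Ghat_zero, h0,
            ← mul_assoc, Quiv.arr_mul_vtx]
        · have hne : cd.Qc a ≠ [] := by simp [hQc]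
          obtain ⟨mq, h1, h2⟩ :=
            Quiv.lemA g.toAut n C hn horder (cd.isoQc a) (cd.endQc a)
          refine ⟨mq, h1, ?_⟩
          rw [← hQc, Quiv.lemC g.toAut n C hn horder (cd.endQc a) hne z, h2 z]
      obtain ⟨mq, hmq1, hmq2⟩ := hQ
      -- the P part
      have hw : vtx ℂ Q (Q.t (C.genArrow a)) *
          (arr ℂ Q (C.genArrow a) * Quiv.Ghat g.toAut mq (vtx ℂ Q (Q.s a) * z)) =
          arr ℂ Q (C.genArrow a) * Quiv.Ghat g.toAut mq (vtx ℂ Q (Q.s a) * z) := by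
        rw [← mul_assoc, Quiv.vtx_mul_arr]
      have hP : ∃ mp : ℕ, (⇑g.onV)^[mp] (Q.t (C.genArrow a)) = Q.t a ∧
          Quiv.theta0 g.toAut n C hn horder
              (pathOf ℂ ((sharp Q g.toAut n C).loc (isoSet Q g.toAut n C)) (cd.P a))
              (arr ℂ Q (C.genArrow a) * Quiv.Ghat g.toAut mq (vtx ℂ Q (Q.s a) * z)) =
            Quiv.Ghat g.toAut mp
              (arr ℂ Q (C.genArrow a) * Quiv.Ghat g.toAut mq (vtx ℂ Q (Q.s a) * z)) := by
        rcases hPa : cd.P a with _ | ⟨p0, ps⟩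
        · refine ⟨0, (cd.endP a).2.1 hPa, ?_⟩
          rw [Quiv.pathOf_nil, map_one, Module.End.one_apply, Quiv.Ghat_zero]
        · obtain ⟨mp, h1, h2⟩ :=
            Quiv.lemA g.toAut n C hn horder (cd.isoP a) (cd.endP a)
          refine ⟨mp, h1, ?_⟩
          conv_lhs => rw [← hPa, ← hw]
          rw [h2 _, hw]
      obtain ⟨mp, hmp1, hmp2⟩ := hP
      -- number theory
      have hmodp : mp % n = ma % n :=
        Quiv.onV_congr g.toAut n hn horder hfree (i := Q.t (C.genArrow a))
          (by rw [hmp1, hta])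
      have hA : (⇑g.onA)^[mp] (C.genArrow a) = a := by
        rw [Quiv.iter_mod _ hn horder.2 mp, hmodp, ← Quiv.iter_mod _ hn horder.2 ma, hma]
      have hze : (mq + ma) % n = 0 % n :=
        Quiv.onV_congr g.toAut n hn horder hfree (i := Q.s (C.genArrow a))
          (by rw [Function.iterate_add_apply, ← hsa, hmq1]; rfl)
      have hsum : (mp + mq) % n = 0 := by
        have e1 : (mp + mq) % n = (ma % n + mq % n) % n := by
          rw [Nat.add_mod, hmodp]
        have e2 : (mq + ma) % n = 0 := by simpa using hze
        rw [e1, ← Nat.add_mod, Nat.add_comm, e2]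
      -- assemble
      show Quiv.theta0 g.toAut n C hn horder
          (pathOf ℂ ((sharp Q g.toAut n C).loc (isoSet Q g.toAut n C))
            ((cd.P a ++ [genLoc Q g.toAut n C a]) ++ cd.Qc a)) z =
        (Algebra.lmul ℂ (PathAlg ℂ Q)) (arr ℂ Q a) z
      rw [Quiv.theta0_append, Quiv.theta0_append, Quiv.theta0_single]
      have hFA : ∀ w, Quiv.FA g.toAut n C (genLoc Q g.toAut n C a) w =
          arr ℂ Q (C.genArrow a) * w := fun w => rfl
      rw [hFA, hmq2, hmp2, map_mul (Quiv.Ghat g.toAut mp), Quiv.Ghat_arr, hA,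
        ← Quiv.Ghat_add, Quiv.Ghat_mod g.toAut n hn horder (mp + mq), hsum,
        Quiv.Ghat_zero, ← mul_assoc, Quiv.arr_mul_vtx]
      rfl
  intro x y hxy
  have e1 := DFunLike.congr_fun hcomp x
  have e2 := DFunLike.congr_fun hcomp y
  rw [AlgHom.comp_apply] at e1 e2
  have h1 : Algebra.lmul ℂ (PathAlg ℂ Q) x = Algebra.lmul ℂ (PathAlg ℂ Q) y := by
    rw [← e1, ← e2, hxy]
  have h2 : x * 1 = y * 1 := DFunLike.congr_fun h1 1
  simpa using h2
end
end

section
/- Grade ℂQ' by assigning the isomorphism arrows r_{i_u,t} degree 1, their inverses degree −1, and all other arrows degree 0. Then for every arrow a ∈ Q₁, the element ξ(a) ∈ ℂQ' is homogeneous of degree 0, of degree n, or of degree −n. -/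
noncomputable section
open scoped Classical

namespace Quiv

variable (Q : Quiv) (g : Aut Q) (n : ℕ)

lemma aux_iterate_onV_mod (horder : Aut.OrderDvd Q g n) (m : ℕ) (i : Q.V) :
    (⇑g.onV)^[m] i = (⇑g.onV)^[m % n] i := by
  conv_lhs => rw [← Nat.div_add_mod m n]
  rw [Function.iterate_add_apply, Function.iterate_mul]
  exact Function.iterate_fixed (horder.1 _) _

lemma aux_lev_unique (horder : Aut.OrderDvd Q g n)
    (hfree : Aut.FreeVertexOrbits Q g n)
    (x : Q.V) (r r' : ℕ) (hr : r < n) (hr' : r' < n)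
    (h : (⇑g.onV)^[r] x = (⇑g.onV)^[r'] x) : r = r' := by
  wlog hle : r ≤ r' generalizing r r'
  · exact (this r' r hr' hr h.symm (le_of_not_ge hle)).symm
  rcases Nat.eq_or_lt_of_le hle with rfl | hlt
  · rfl
  exfalso
  have hx : (⇑g.onV)^[r' - r] x = x := by
    have hinj : Function.Injective ((⇑g.onV)^[r]) := g.onV.injective.iterate r
    apply hinj
    rw [← Function.iterate_add_apply, Nat.add_sub_cancel' hle]
    exact h.symm
  exact hfree x (r' - r) (by omega) (by omega) hx

lemma aux_telescope (Q' : Quiv) (w : Q'.A → ℤ) (L : Q'.V → ℤ)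
    (P : Q'.A → Prop) (hP : ∀ x, P x → w x = L (Q'.t x) - L (Q'.s x)) :
    ∀ l : List Q'.A, (∀ x ∈ l, P x) → ∀ i j, IsPathFrom Q' l i j →
      (l.map w).sum = L j - L i := by
  intro l
  induction l with
  | nil =>
      intro _ i j hpath
      simp [hpath.2.1 rfl]
  | cons a l ih =>
      intro hmem i j hpath
      obtain ⟨hchain, -, hhead, hlast⟩ := hpath
      have hta : Q'.t a = j := hhead (by simp)
      cases l with
      | nil =>
          have hsa : Q'.s a = i := hlast (by simp)
          simp [hP a (hmem a (by simp)), hta, hsa]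
      | cons b t =>
          have hab : Q'.s a = Q'.t b := (List.isChain_cons_cons.mp hchain).1
          have hrest : IsPathFrom Q' (b :: t) i (Q'.s a) := by
            refine ⟨(List.isChain_cons_cons.mp hchain).2, by simp, ?_, ?_⟩
            · intro h
              simp [hab.symm]
            · intro h
              have := hlast (by simp)
              rw [List.getLast_cons (by simp)] at this
              exact this
          have hsum := ih (fun x hx => hmem x (by simp [hx])) i (Q'.s a) hrest
          rw [List.map_cons, List.sum_cons, hsum, hP a (hmem a (by simp)), hta]
          ring

end Quiv

open Quiv in
/-- Grade `ℂQ'` by assigning the isomorphism arrows degree `1`,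
their inverses degree `−1`, and all other arrows degree `0`.  Then for every
arrow `a ∈ Q₁`, the element `ξ(a) ∈ ℂQ'` is homogeneous of degree `0`, of
degree `n`, or of degree `−n`. -/
theorem statement_4 (Q : Quiv) (T : Quiv.Tiling Q) (g : Quiv.TAut Q T) (n : ℕ)
    (hn : 0 < n)
    (horder : Quiv.Aut.OrderDvd Q g.toAut n)
    (horderTV : ∀ v, (⇑g.onTV)^[n] v = v)
    (hfree : Quiv.Aut.FreeVertexOrbits Q g.toAut n)
    (C : Quiv.OrbitChoice Q g.toAut)
    (cd : Quiv.ConnData Q g.toAut n C)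
    (ξ : PathAlg ℂ Q →ₐ[ℂ] LocAlg ℂ (sharp Q g.toAut n C) (isoSet Q g.toAut n C))
    (hξ : XiSpec ℂ Q g.toAut n C cd ξ) :
    ∀ a : Q.A,
      ξ (arr ℂ Q a) ∈ degPart ℂ (sharp Q g.toAut n C) (isoSet Q g.toAut n C)
          (sharpWeight Q g.toAut n C) 0 ∨
      ξ (arr ℂ Q a) ∈ degPart ℂ (sharp Q g.toAut n C) (isoSet Q g.toAut n C)
          (sharpWeight Q g.toAut n C) (n : ℤ) ∨
      ξ (arr ℂ Q a) ∈ degPart ℂ (sharp Q g.toAut n C) (isoSet Q g.toAut n C)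
          (sharpWeight Q g.toAut n C) (-(n : ℤ)) := by
  classical
  -- the level function
  have hex : ∀ i : Q.V, ∃ r : ℕ, r < n ∧ (⇑g.onV)^[r] (C.repV i) = i := by
    intro i
    obtain ⟨m, hm⟩ := C.repV_orbit i
    exact ⟨m % n, Nat.mod_lt _ hn, by
      rw [← aux_iterate_onV_mod Q g.toAut n horder]; exact hm⟩
  choose lev hlevlt hlev using hex
  have huniq : ∀ (j : Q.V) (r : ℕ), (⇑g.onV)^[r] (C.repV j) = j → lev j = r % n := by
    intro j r h
    refine aux_lev_unique Q g.toAut n horder hfree (C.repV j) _ _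
      (hlevlt j) (Nat.mod_lt _ hn) ?_
    rw [hlev j, ← aux_iterate_onV_mod Q g.toAut n horder r (C.repV j), h]
  have hrep : ∀ (m : ℕ) (i : Q.V), C.repV ((⇑g.onV)^[m] i) = C.repV i := by
    intro m
    induction m with
    | zero => intro i; rfl
    | succ k ih =>
        intro i
        rw [Function.iterate_succ_apply', C.repV_comm, ih]
  have hlevAt : ∀ (u : Q.V), C.repV u = u → ∀ t : ℕ, t < n →
      lev ((⇑g.onV)^[t] u) = t := by
    intro u hu t ht
    have h : (⇑g.onV)^[t] (C.repV ((⇑g.onV)^[t] u)) = (⇑g.onV)^[t] u := by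
      rw [hrep, hu]
    rw [huniq _ t h, Nat.mod_eq_of_lt ht]
  have hAt : ∀ (m : ℕ) (x : Q.A), Q.t ((⇑g.onA)^[m] x) = (⇑g.onV)^[m] (Q.t x) := by
    intro m
    induction m with
    | zero => intro x; rfl
    | succ k ih =>
        intro x
        rw [Function.iterate_succ_apply', Function.iterate_succ_apply',
          g.t_comm, ih]
  have hAs : ∀ (m : ℕ) (x : Q.A), Q.s ((⇑g.onA)^[m] x) = (⇑g.onV)^[m] (Q.s x) := by
    intro m
    induction m with
    | zero => intro x; rfl
    | succ k ih =>
        intro x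
        rw [Function.iterate_succ_apply', Function.iterate_succ_apply',
          g.s_comm, ih]
  set w' := locWeight (sharp Q g.toAut n C) (isoSet Q g.toAut n C)
    (sharpWeight Q g.toAut n C) with hw'
  -- per-arrow degree
  have harrow : ∀ x : ((sharp Q g.toAut n C).loc (isoSet Q g.toAut n C)).A,
      ((∃ y, x = isoArrLoc Q g.toAut n C y) ∨ (∃ y, x = isoInvLoc Q g.toAut n C y)) →
      w' x = (lev (((sharp Q g.toAut n C).loc (isoSet Q g.toAut n C)).t x) : ℤ)
        - lev (((sharp Q g.toAut n C).loc (isoSet Q g.toAut n C)).s x) := by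
    rintro x (⟨y, rfl⟩ | ⟨y, rfl⟩)
    · have h1 : lev ((⇑g.onV)^[y.2.1] y.1.1) = y.2.1 :=
        hlevAt y.1.1 y.1.2 y.2.1 (by have := y.2.2; omega)
      have h2 : lev ((⇑g.onV)^[y.2.1 + 1] y.1.1) = y.2.1 + 1 :=
        hlevAt y.1.1 y.1.2 (y.2.1 + 1) (by have := y.2.2; omega)
      show w' (Sum.inl (Sum.inr y)) = _
      simp only [hw', locWeight, Quiv.loc, sharp, Sum.elim_inl, Sum.elim_inr,
        sharpWeight, isoArrLoc, h1, h2]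
      push_cast
      ring
    · have h1 : lev ((⇑g.onV)^[y.2.1] y.1.1) = y.2.1 :=
        hlevAt y.1.1 y.1.2 y.2.1 (by have := y.2.2; omega)
      have h2 : lev ((⇑g.onV)^[y.2.1 + 1] y.1.1) = y.2.1 + 1 :=
        hlevAt y.1.1 y.1.2 (y.2.1 + 1) (by have := y.2.2; omega)
      show w' (Sum.inr ⟨Sum.inr y, ⟨y, rfl⟩⟩) = _
      simp only [hw', locWeight, Quiv.loc, sharp, Sum.elim_inl, Sum.elim_inr,
        sharpWeight, isoInvLoc, h1, h2]
      push_cast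
      ring
  intro a
  obtain ⟨m, hm⟩ := C.genArrow_orbit a
  have hta : Q.t a = (⇑g.onV)^[m] (Q.t (C.genArrow a)) := by
    conv_lhs => rw [← hm]
    rw [hAt]
  have hsa : Q.s a = (⇑g.onV)^[m] (Q.s (C.genArrow a)) := by
    conv_lhs => rw [← hm]
    rw [hAs]
  have hLt : lev (Q.t a) = (m + lev (Q.t (C.genArrow a))) % n := by
    apply huniq
    rw [hta, hrep, Function.iterate_add_apply, hlev]
  have hLs : lev (Q.s a) = (m + lev (Q.s (C.genArrow a))) % n := by
    apply huniq
    rw [hsa, hrep, Function.iterate_add_apply, hlev]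
  have hsumP := aux_telescope _ w' (fun i => (lev i : ℤ)) _ harrow
    (cd.P a) (cd.isoP a) _ _ (cd.endP a)
  have hsumQ := aux_telescope _ w' (fun i => (lev i : ℤ)) _ harrow
    (cd.Qc a) (cd.isoQc a) _ _ (cd.endQc a)
  have hgw : w' (genLoc Q g.toAut n C a) = 0 := by
    simp [hw', genLoc, locWeight, sharpWeight]
    rfl
  have hxi : ((xiArrList Q g.toAut n C cd a).map w').sum
      = ((lev (Q.t a) : ℤ) - lev (Q.t (C.genArrow a)))
        + ((lev (Q.s (C.genArrow a)) : ℤ) - lev (Q.s a)) := by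
    unfold xiArrList
    rw [List.map_append, List.map_append, List.sum_append, List.sum_append]
    simp only [List.map_cons, List.map_nil, List.sum_cons, List.sum_nil, hgw]
    rw [hsumP, hsumQ]
    ring
  set k1 := (m + lev (Q.t (C.genArrow a))) / n with hk1
  set k4 := (m + lev (Q.s (C.genArrow a))) / n with hk4
  have he1 : m + lev (Q.t (C.genArrow a)) = n * k1 + lev (Q.t a) := by
    rw [hLt]; exact (Nat.div_add_mod _ n).symm
  have he4 : m + lev (Q.s (C.genArrow a)) = n * k4 + lev (Q.s a) := by
    rw [hLs]; exact (Nat.div_add_mod _ n).symm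
  have hd : ((lev (Q.t a) : ℤ) - lev (Q.t (C.genArrow a)))
      + ((lev (Q.s (C.genArrow a)) : ℤ) - lev (Q.s a))
      = (n : ℤ) * ((k4 : ℤ) - k1) := by
    have e1 : (m : ℤ) + lev (Q.t (C.genArrow a))
        = (n : ℤ) * k1 + lev (Q.t a) := by exact_mod_cast he1
    have e4 : (m : ℤ) + lev (Q.s (C.genArrow a))
        = (n : ℤ) * k4 + lev (Q.s a) := by exact_mod_cast he4
    linear_combination e4 - e1
  have hnz : (0 : ℤ) < n := by exact_mod_cast hn
  have hb1 := hlevlt (Q.t a)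
  have hb2 := hlevlt (Q.t (C.genArrow a))
  have hb3 := hlevlt (Q.s (C.genArrow a))
  have hb4 := hlevlt (Q.s a)
  have hbd : -(2 * (n : ℤ)) < (n : ℤ) * ((k4 : ℤ) - k1)
      ∧ (n : ℤ) * ((k4 : ℤ) - k1) < 2 * n := by
    rw [← hd]
    constructor <;> push_cast <;> omega
  have htri : (k4 : ℤ) - k1 = 0 ∨ (k4 : ℤ) - k1 = 1 ∨ (k4 : ℤ) - k1 = -1 := by
    have h2 : (k4 : ℤ) - k1 < 2 := by
      by_contra hc
      push_neg at hc
      have : (n : ℤ) * 2 ≤ (n : ℤ) * ((k4 : ℤ) - k1) :=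
        mul_le_mul_of_nonneg_left hc hnz.le
      linarith [hbd.2]
    have h3 : -2 < (k4 : ℤ) - k1 := by
      by_contra hc
      push_neg at hc
      have : (n : ℤ) * ((k4 : ℤ) - k1) ≤ (n : ℤ) * (-2) :=
        mul_le_mul_of_nonneg_left hc hnz.le
      linarith [hbd.1]
    omega
  have hmemd : ∀ d : ℤ, ((xiArrList Q g.toAut n C cd a).map w').sum = d →
      ξ (arr ℂ Q a) ∈ degPart ℂ (sharp Q g.toAut n C) (isoSet Q g.toAut n C)
        (sharpWeight Q g.toAut n C) d := by
    intro d hdsum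
    rw [hξ.2 a]
    exact Submodule.subset_span (Or.inr ⟨_, hdsum, rfl⟩)
  rcases htri with h | h | h
  · left
    apply hmemd
    rw [hxi, hd, h]
    ring
  · right; left
    apply hmemd
    rw [hxi, hd, h]
    ring
  · right; right
    apply hmemd
    rw [hxi, hd, h]
    ring
end
end
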